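/- Gaussian gradient through the factor R: For a twice continuously differentiable f : ℝᵏ → ℝ of polynomial growth, the gradient with respect to the matrix R of E_{ε ∼ N(0,I)}[f(μ + R ε)] equals E_{ε ∼ N(0,I)}[g εᵀ]ᵀ entrywise, i.e. ∂/∂R_{ij} E[f(μ + R ε)] = E[ε_j (∇f)_i(μ + R ε)]. -/

import Mathlib

open MeasureTheory ProbabilityTheory Matrix

/-- The standard Gaussian measure `N(0, I)` on `ℝᵏ`. -/
noncomputable def stdGaussianPi (k : ℕ) : Measure (Fin k → ℝ) :=
  Measure.pi (fun _ => gaussianReal 0 1)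

/-- Polynomial growth for a function on `ℝᵏ`. -/
def PolyGrowth {k : ℕ} (f : (Fin k → ℝ) → ℝ) : Prop :=
  ∃ C : ℝ, ∃ n : ℕ, ∀ x, |f x| ≤ C * (1 + ‖x‖) ^ n

/-- Polynomial growth of the gradient. -/
def GradPolyGrowth {k : ℕ} (f : (Fin k → ℝ) → ℝ) : Prop :=
  ∃ C : ℝ, ∃ n : ℕ, ∀ x, ‖fderiv ℝ f x‖ ≤ C * (1 + ‖x‖) ^ n

lemma aux_exp_abs (c : ℝ) :
    Integrable (fun x : ℝ => Real.exp (c * |x|)) (gaussianReal 0 1) := by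
  rw [gaussianReal_of_var_ne_zero _ one_ne_zero]
  rw [integrable_withDensity_iff (measurable_gaussianPDF 0 1)
    (Filter.Eventually.of_forall fun x => ENNReal.ofReal_lt_top)]
  have hb : ∀ x : ℝ, Real.exp (c * |x|) * (gaussianPDF 0 1 x).toReal ≤
      (Real.sqrt (2 * Real.pi))⁻¹ * Real.exp (c ^ 2) * Real.exp (-(1/4) * x ^ 2) := by
    intro x
    rw [gaussianPDF, ENNReal.toReal_ofReal (gaussianPDFReal_nonneg 0 1 x), gaussianPDFReal]
    simp only [NNReal.coe_one, mul_one, sub_zero]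
    have h1 : Real.exp (c * |x|) * Real.exp (-x ^ 2 / 2) ≤
        Real.exp (c ^ 2) * Real.exp (-(1/4) * x ^ 2) := by
      rw [← Real.exp_add, ← Real.exp_add]
      exact Real.exp_le_exp.2 (by nlinarith [sq_nonneg (|x|/2 - c), sq_abs x])
    calc Real.exp (c * |x|) * ((Real.sqrt (2 * Real.pi))⁻¹ * Real.exp (-x ^ 2 / 2))
        = (Real.sqrt (2 * Real.pi))⁻¹ * (Real.exp (c * |x|) * Real.exp (-x ^ 2 / 2)) := by ring
      _ ≤ (Real.sqrt (2 * Real.pi))⁻¹ * (Real.exp (c ^ 2) * Real.exp (-(1/4) * x ^ 2)) := by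
          apply mul_le_mul_of_nonneg_left h1 (by positivity)
      _ = (Real.sqrt (2 * Real.pi))⁻¹ * Real.exp (c ^ 2) * Real.exp (-(1/4) * x ^ 2) := by ring
  refine Integrable.mono' ((integrable_exp_neg_mul_sq (by norm_num : (0:ℝ) < 1/4)).const_mul
    ((Real.sqrt (2 * Real.pi))⁻¹ * Real.exp (c ^ 2))) ?_ (Filter.Eventually.of_forall fun x => ?_)
  · exact (((Real.measurable_exp.comp (measurable_const.mul measurable_abs)).mul
      (measurable_gaussianPDF 0 1).ennreal_toReal)).aestronglyMeasurable
  · rw [Real.norm_eq_abs, abs_of_nonneg (by positivity)]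
    simpa [mul_assoc] using hb x

lemma aux_prod_gauss {k : ℕ} (f : ℝ → ℝ) (hf : Integrable f (gaussianReal 0 1)) :
    Integrable (fun x : Fin k → ℝ => ∏ m, f (x m)) (stdGaussianPi k) := by
  letI : MeasureSpace ℝ := ⟨gaussianReal 0 1⟩
  haveI : SigmaFinite (volume : Measure ℝ) :=
    (inferInstance : SigmaFinite (gaussianReal 0 1))
  have h : stdGaussianPi k = (volume : Measure (Fin k → ℝ)) := rfl
  rw [h]
  exact Integrable.fintype_prod (f := fun _ : Fin k => f) fun _ => hf

lemma aux_poly_int (k n : ℕ) :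
    Integrable (fun x : Fin k → ℝ => (1 + ‖x‖) ^ n) (stdGaussianPi k) := by
  refine Integrable.mono' (aux_prod_gauss (fun t => Real.exp (n * |t|)) (aux_exp_abs n)) ?_
    (Filter.Eventually.of_forall fun x => ?_)
  · exact ((continuous_const.add continuous_norm).pow n).aestronglyMeasurable
  · have h0 : (0:ℝ) ≤ 1 + ‖x‖ := by positivity
    rw [Real.norm_eq_abs, abs_of_nonneg (by positivity)]
    have h1 : (1 + ‖x‖) ^ n ≤ Real.exp (n * ‖x‖) := by
      calc (1 + ‖x‖) ^ n ≤ Real.exp ‖x‖ ^ n := by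
            exact pow_le_pow_left₀ h0 (by simpa [add_comm] using Real.add_one_le_exp ‖x‖) n
        _ = Real.exp (n * ‖x‖) := by rw [← Real.exp_nat_mul]
    have h2 : ‖x‖ ≤ ∑ m, |x m| := by
      rcases isEmpty_or_nonempty (Fin k) with hk | hk
      · rw [Subsingleton.elim x 0]; simp [Finset.univ_eq_empty]
      · exact pi_norm_le_iff_of_nonneg (Finset.sum_nonneg fun m _ => abs_nonneg _) |>.2
          fun m => Finset.single_le_sum (fun m _ => abs_nonneg (x m)) (Finset.mem_univ m)
    calc (1 + ‖x‖) ^ n ≤ Real.exp (n * ‖x‖) := h1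
      _ ≤ Real.exp (n * ∑ m, |x m|) := Real.exp_le_exp.2 (mul_le_mul_of_nonneg_left h2 (Nat.cast_nonneg n))
      _ = ∏ m, Real.exp (n * |x m|) := by rw [Finset.mul_sum, Real.exp_sum]


/-- Stochastic backpropagation through the factor `R`:
`∂/∂R_{ij} E_{ε∼N(0,I)}[f(μ + R ε)] = E[ε_j (∇f)_i(μ + R ε)]`, the derivative
being taken along the matrix direction `E_{ij}`. -/
theorem gradient_wrt_factor {k : ℕ} (f : (Fin k → ℝ) → ℝ)
    (hf : ContDiff ℝ 2 f) (hfp : PolyGrowth f) (hgp : GradPolyGrowth f)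
    (μ : Fin k → ℝ) (R : Matrix (Fin k) (Fin k) ℝ) (i j : Fin k) :
    HasDerivAt
      (fun t : ℝ =>
        ∫ ε, f (μ + (R + t • Matrix.single i j 1).mulVec ε)
          ∂(stdGaussianPi k))
      (∫ ε, ε j * fderiv ℝ f (μ + R.mulVec ε) (Pi.single i 1)
          ∂(stdGaussianPi k))
      0 := by
  classical
  obtain ⟨Cf, nf, hCf⟩ := hfp
  obtain ⟨Cg, ng, hCg⟩ := hgp
  have hCf0 : 0 ≤ Cf := le_trans (abs_nonneg (f 0)) (by simpa using hCf 0)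
  have hCg0 : 0 ≤ Cg := le_trans (norm_nonneg (fderiv ℝ f 0)) (by simpa using hCg 0)
  set E : Matrix (Fin k) (Fin k) ℝ := Matrix.single i j 1 with hEdef
  have opb : ∀ M : Matrix (Fin k) (Fin k) ℝ, ∃ C : ℝ, 0 ≤ C ∧
      ∀ ε : Fin k → ℝ, ‖M.mulVec ε‖ ≤ C * ‖ε‖ := fun M =>
    ⟨‖LinearMap.toContinuousLinearMap M.mulVecLin‖, norm_nonneg _, fun ε => by
      simpa using (LinearMap.toContinuousLinearMap M.mulVecLin).le_opNorm ε⟩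
  obtain ⟨CR, hCR0, hCR⟩ := opb R
  obtain ⟨CE, hCE0, hCE⟩ := opb E
  have hcontM : ∀ M : Matrix (Fin k) (Fin k) ℝ,
      Continuous (fun ε : Fin k → ℝ => μ + M.mulVec ε) := fun M =>
    continuous_const.add (LinearMap.toContinuousLinearMap M.mulVecLin).continuous
  have hEv : ∀ ε : Fin k → ℝ, E.mulVec ε = ε j • (Pi.single i 1 : Fin k → ℝ) := by
    intro ε
    rw [hEdef, Matrix.single_mulVec]
    ext m
    rcases eq_or_ne m i with rfl | hm
    · simp
    · simp [Function.update_of_ne hm, Pi.single_eq_of_ne hm]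
  set F : ℝ → (Fin k → ℝ) → ℝ := fun t ε => f (μ + (R + t • E).mulVec ε) with hF
  set F' : ℝ → (Fin k → ℝ) → ℝ := fun t ε =>
    ε j * fderiv ℝ f (μ + (R + t • E).mulVec ε) (Pi.single i 1) with hF'
  have hrw : ∀ (s : ℝ) (ε : Fin k → ℝ),
      μ + (R + s • E).mulVec ε = (μ + R.mulVec ε) + s • E.mulVec ε := by
    intro s ε; rw [Matrix.add_mulVec, Matrix.smul_mulVec, add_assoc]
  have hdiff : ∀ (ε : Fin k → ℝ) (t : ℝ), HasDerivAt (fun s => F s ε) (F' t ε) t := by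
    intro ε t
    have h1 : HasDerivAt (fun s : ℝ => (μ + R.mulVec ε) + s • E.mulVec ε) (E.mulVec ε) t := by
      simpa using ((hasDerivAt_id t).smul_const (E.mulVec ε)).const_add (μ + R.mulVec ε)
    have h2 := ((hf.differentiable (by norm_num)).differentiableAt.hasFDerivAt
      (x := (μ + R.mulVec ε) + t • E.mulVec ε)).comp_hasDerivAt t h1
    have h3 : ∀ p : Fin k → ℝ,
        fderiv ℝ f p (E.mulVec ε) = ε j * fderiv ℝ f p (Pi.single i 1) := by
      intro p; rw [hEv ε, ContinuousLinearMap.map_smul, smul_eq_mul]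
    simp only [hF, hF', hrw, ← h3]
    exact h2
  have hpt : ∀ (t : ℝ), |t| ≤ 1 → ∀ ε : Fin k → ℝ,
      1 + ‖μ + (R + t • E).mulVec ε‖ ≤ (1 + ‖μ‖ + CR + CE) * (1 + ‖ε‖) := by
    intro t ht ε
    have h1 : ‖(R + t • E).mulVec ε‖ ≤ (CR + CE) * ‖ε‖ := by
      rw [Matrix.add_mulVec, Matrix.smul_mulVec]
      calc ‖R.mulVec ε + t • E.mulVec ε‖ ≤ ‖R.mulVec ε‖ + ‖t • E.mulVec ε‖ := norm_add_le _ _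
        _ ≤ CR * ‖ε‖ + |t| * (CE * ‖ε‖) := by
            refine add_le_add (hCR ε) ?_
            rw [norm_smul, Real.norm_eq_abs]
            exact mul_le_mul_of_nonneg_left (hCE ε) (abs_nonneg t)
        _ ≤ (CR + CE) * ‖ε‖ := by nlinarith [mul_nonneg hCE0 (norm_nonneg ε), abs_nonneg t]
    have h2 : ‖μ + (R + t • E).mulVec ε‖ ≤ ‖μ‖ + (CR + CE) * ‖ε‖ :=
      le_trans (norm_add_le _ _) (by linarith)
    nlinarith [norm_nonneg ε, norm_nonneg μ, mul_nonneg (norm_nonneg μ) (norm_nonneg ε), mul_nonneg hCR0 (norm_nonneg ε), mul_nonneg hCE0 (norm_nonneg ε)]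
  set B : ℝ := 1 + ‖μ‖ + CR + CE with hB
  have hB1 : (1:ℝ) ≤ B := by simp only [hB]; linarith [norm_nonneg μ]
  set bound : (Fin k → ℝ) → ℝ := fun ε => Cg * B ^ ng * (1 + ‖ε‖) ^ (ng + 1) with hbd
  have h_bound : ∀ ε : Fin k → ℝ, ∀ t ∈ Metric.ball (0:ℝ) 1, ‖F' t ε‖ ≤ bound ε := by
    intro ε t ht
    have ht1 : |t| ≤ 1 := le_of_lt (by simpa [Real.dist_eq] using ht)
    have hx := hpt t ht1 ε
    have h0 : (0:ℝ) ≤ 1 + ‖ε‖ := by positivity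
    have hs : ‖(Pi.single i 1 : Fin k → ℝ)‖ = 1 := by
      rw [Pi.norm_single]; simp
    have h1 : ‖F' t ε‖ ≤ ‖ε‖ * ‖fderiv ℝ f (μ + (R + t • E).mulVec ε)‖ := by
      have hop := (fderiv ℝ f (μ + (R + t • E).mulVec ε)).le_opNorm (Pi.single i 1 : Fin k → ℝ)
      rw [hs, mul_one] at hop
      have habs : |ε j| ≤ ‖ε‖ := by simpa using norm_le_pi_norm ε j
      rw [hF', Real.norm_eq_abs, abs_mul]
      exact mul_le_mul habs hop (abs_nonneg _) (norm_nonneg _)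
    have h2 : ‖fderiv ℝ f (μ + (R + t • E).mulVec ε)‖ ≤ Cg * (B * (1 + ‖ε‖)) ^ ng := by
      refine le_trans (hCg _) (mul_le_mul_of_nonneg_left ?_ hCg0)
      exact pow_le_pow_left₀ (by positivity) (by linarith) ng
    calc ‖F' t ε‖ ≤ ‖ε‖ * (Cg * (B * (1 + ‖ε‖)) ^ ng) :=
          le_trans h1 (mul_le_mul_of_nonneg_left h2 (norm_nonneg ε))
      _ ≤ (1 + ‖ε‖) * (Cg * (B * (1 + ‖ε‖)) ^ ng) :=
          mul_le_mul_of_nonneg_right (by linarith [norm_nonneg ε]) (by positivity)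
      _ = Cg * B ^ ng * (1 + ‖ε‖) ^ (ng + 1) := by rw [mul_pow]; ring
  have hF_meas : ∀ t : ℝ, AEStronglyMeasurable (F t) (stdGaussianPi k) := fun t =>
    (hf.continuous.comp (hcontM (R + t • E))).aestronglyMeasurable
  have hfderiv_cont : Continuous (fderiv ℝ f) := hf.continuous_fderiv (by norm_num)
  have hF'_meas : AEStronglyMeasurable (F' 0) (stdGaussianPi k) := by
    refine Continuous.aestronglyMeasurable ?_
    exact (continuous_apply j).mul
      (((hfderiv_cont.comp (hcontM (R + (0:ℝ) • E)))).clm_apply continuous_const)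
  have hF_int : Integrable (F 0) (stdGaussianPi k) := by
    refine Integrable.mono' ((aux_poly_int k nf).const_mul (Cf * B ^ nf))
      ((hf.continuous.comp (hcontM (R + (0:ℝ) • E))).aestronglyMeasurable)
      (Filter.Eventually.of_forall fun ε => ?_)
    have hx := hpt 0 (by norm_num) ε
    have h2 : |f (μ + (R + (0:ℝ) • E).mulVec ε)| ≤ Cf * (B * (1 + ‖ε‖)) ^ nf := by
      refine le_trans (hCf _) (mul_le_mul_of_nonneg_left ?_ hCf0)
      exact pow_le_pow_left₀ (by positivity) (by linarith) nf
    rw [hF, Real.norm_eq_abs]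
    calc |f (μ + (R + (0:ℝ) • E).mulVec ε)| ≤ Cf * (B * (1 + ‖ε‖)) ^ nf := h2
      _ = Cf * B ^ nf * (1 + ‖ε‖) ^ nf := by rw [mul_pow]; ring
  have hbound_int : Integrable bound (stdGaussianPi k) :=
    (aux_poly_int k (ng + 1)).const_mul (Cg * B ^ ng)
  have main := (hasDerivAt_integral_of_dominated_loc_of_deriv_le (μ := stdGaussianPi k)
    (F := F) (F' := F') (x₀ := (0:ℝ)) (bound := bound) (Metric.ball_mem_nhds (0:ℝ) one_pos)
    (Filter.Eventually.of_forall hF_meas) hF_int hF'_meas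
    (Filter.Eventually.of_forall fun ε t ht => h_bound ε t ht) hbound_int
    (Filter.Eventually.of_forall fun ε t _ => hdiff ε t)).2
  have hval : (∫ ε, F' 0 ε ∂(stdGaussianPi k)) =
      ∫ ε, ε j * fderiv ℝ f (μ + R.mulVec ε) (Pi.single i 1) ∂(stdGaussianPi k) := by
    refine integral_congr_ae (Filter.Eventually.of_forall fun ε => ?_)
    simp [hF']
  rw [hval] at main
  exact main
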